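/- The transformation T maps G into G, and the restriction of T to G is a bijection from G onto G. -/

import Mathlib

open MeasureTheory ENNReal Filter

/-- The coordinate space: Lean index `n` is paper index `n+1`, so this is
`X_{n+1} = {0,1,…,5^{n+1}}`. -/
abbrev Xc (n : ℕ) : Type := Fin (5 ^ (n + 1) + 1)

/-- The weight of a point of `X_{n+1}`: `μ_{n+1}(0) = 1/2`, `μ_{n+1}(i) = 1/(2·5^{n+1})`
for `i ≠ 0`. -/
noncomputable def w (n : ℕ) (a : Xc n) : ℝ≥0∞ :=
  if a = 0 then 1 / 2 else 1 / (2 * 5 ^ (n + 1))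

/-- The full product space `X = ∏_{n ≥ 1} X_n`. -/
abbrev XX : Type := (n : ℕ) → Xc n

/-- The cylinder `Z_A` determined by a set `A` of configurations on a finite set `Γ`
of coordinates. -/
def cylSet (Γ : Finset ℕ) (A : Set ((i : Γ) → Xc i)) : Set XX :=
  {x | (fun i : Γ => x i) ∈ A}

/-- The point cylinder `Z_u`. -/
def cylPt (Γ : Finset ℕ) (u : (i : Γ) → Xc i) : Set XX := cylSet Γ {u}

/-- `μ` is the product measure `⊗ μ_n` iff every point cylinder gets the product of the
weights of its coordinates. (This property determines the product measure uniquely.) -/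
def IsProductMeasure (μ : Measure XX) : Prop :=
  ∀ (Γ : Finset ℕ) (u : (i : Γ) → Xc i), μ (cylPt Γ u) = ∏ i : Γ, w i (u i)

/-- `π_{n+1} : X_{n+1} → {0,1}`, sending `0` to `0` and everything else to `1`. -/
def par (n : ℕ) (a : Xc n) : ℕ := if a = 0 then 0 else 1

/-- The equivalence relation `R`: `x R y` iff for some `n ≥ 1` the coordinates of `x` and `y`
beyond the `n`-th agree, and the parities of `∑_{i=1}^{n} π_i(x_i)` and
`∑_{i=1}^{n} π_i(y_i)` coincide. -/
def Rrel (x y : XX) : Prop :=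
  ∃ n : ℕ, 1 ≤ n ∧ (∀ i, n ≤ i → x i = y i) ∧
    (∑ i ∈ Finset.range n, par i (x i)) % 2 = (∑ i ∈ Finset.range n, par i (y i)) % 2

/-- The conull set `G` of points with infinitely many non-maximal and infinitely many
non-zero coordinates of (paper) index `≥ 2` (Lean index `≥ 1`). -/
def G : Set XX :=
  {x | {i : ℕ | 1 ≤ i ∧ (x i : ℕ) < 5 ^ (i + 1)}.Infinite ∧
    {i : ℕ | 1 ≤ i ∧ x i ≠ 0}.Infinite}

open Classical in
/-- The transformation `T`. If `x_1 ∈ {1,2,3,4}` (Lean coordinate `0`), it increments the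
first coordinate. Otherwise (`x_1 ∈ {0,5}`), with `N(x)` the least (paper) index `≥ 2` with
`x_{N(x)} < 5^{N(x)}`, it sets the first coordinate to `a_x`, the coordinates strictly between
`1` and `N(x)` to `0`, increments the `N(x)`-th coordinate, and keeps the rest; here
`a_x ∈ {0,1}` has the parity of `π_1(x_1) + ⋯ + π_{N(x)}(x_{N(x)}) - 1`. On points where no
such `N(x)` exists (a null set), `T` is defined to be the identity. -/
noncomputable def T (x : XX) : XX :=
  if 1 ≤ (x 0 : ℕ) ∧ (x 0 : ℕ) ≤ 4 then
    Function.update x 0 (x 0 + 1)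
  else if h : ∃ i, 1 ≤ i ∧ (x i : ℕ) < 5 ^ (i + 1) then
    fun i =>
      if i = 0 then
        (⟨((∑ j ∈ Finset.range (Nat.find h + 1), par j (x j)) + 1) % 2, by
          have h2 : ((∑ j ∈ Finset.range (Nat.find h + 1), par j (x j)) + 1) % 2 < 2 :=
            Nat.mod_lt _ (by norm_num)
          have h3 : 1 ≤ 5 ^ (i + 1) := Nat.one_le_pow _ _ (by norm_num)
          omega⟩ : Xc i)
      else if i < Nat.find h then 0
      else if hiN : i = Nat.find h then
        cast (congrArg Xc hiN).symm (x (Nat.find h) + 1)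
      else x i
  else x

lemma xcVal_le (i : ℕ) (a : Xc i) : (a : ℕ) ≤ 5 ^ (i + 1) := Nat.lt_succ_iff.mp a.isLt

lemma par_le (n : ℕ) (a : Xc n) : par n a ≤ 1 := by
  unfold par; split <;> omega

lemma par_zero_iff (n : ℕ) (a : Xc n) : par n a = 0 ↔ a = 0 := by
  unfold par; split <;> simp_all

lemma mem_G_of_eventually_eq {x y : XX} (N : ℕ) (h : ∀ i, N < i → y i = x i)
    (hx : x ∈ G) : y ∈ G := by
  obtain ⟨h1, h2⟩ := hx
  constructor
  · apply (h1.diff (Set.finite_Iic N)).mono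
    rintro i ⟨⟨hi1, hi2⟩, hi3⟩
    simp only [Set.mem_Iic, not_le] at hi3
    exact ⟨hi1, by rw [h i hi3]; exact hi2⟩
  · apply (h2.diff (Set.finite_Iic N)).mono
    rintro i ⟨⟨hi1, hi2⟩, hi3⟩
    simp only [Set.mem_Iic, not_le] at hi3
    exact ⟨hi1, by rw [h i hi3]; exact hi2⟩

lemma T_spec (x : XX) (hx0 : ¬(1 ≤ (x 0 : ℕ) ∧ (x 0 : ℕ) ≤ 4))
    (h : ∃ i, 1 ≤ i ∧ (x i : ℕ) < 5 ^ (i + 1)) :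
    ((T x 0 : ℕ) = ((∑ j ∈ Finset.range (Nat.find h + 1), par j (x j)) + 1) % 2) ∧
    (∀ i, 1 ≤ i → i < Nat.find h → T x i = 0) ∧
    ((T x (Nat.find h) : ℕ) = (x (Nat.find h) : ℕ) + 1) ∧
    (∀ i, Nat.find h < i → T x i = x i) := by
  have hN1 : 1 ≤ Nat.find h := (Nat.find_spec h).1
  have hT : T x = fun i =>
      if i = 0 then
        (⟨((∑ j ∈ Finset.range (Nat.find h + 1), par j (x j)) + 1) % 2, by
          have h2 : ((∑ j ∈ Finset.range (Nat.find h + 1), par j (x j)) + 1) % 2 < 2 :=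
            Nat.mod_lt _ (by norm_num)
          have h3 : 1 ≤ 5 ^ (i + 1) := Nat.one_le_pow _ _ (by norm_num)
          omega⟩ : Xc i)
      else if i < Nat.find h then 0
      else if hiN : i = Nat.find h then
        cast (congrArg Xc hiN).symm (x (Nat.find h) + 1)
      else x i := by
    unfold T
    rw [if_neg hx0, dif_pos h]
  refine ⟨?_, ?_, ?_, ?_⟩
  · rw [hT]
    simp only
    split_ifs with h1
    · rfl
    · exact absurd trivial h1
  · intro i hi1 hi2
    rw [hT]
    simp only
    split_ifs with h1
    · omega
    · rfl
  · rw [hT]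
    simp only
    split_ifs with h1 h2
    · omega
    · omega
    · rw [eq_of_heq (cast_heq _ _)]
      apply Fin.val_add_one_of_lt
      rw [Fin.lt_def, Fin.val_last]
      exact (Nat.find_spec h).2
  · intro i hi
    rw [hT]
    simp only
    split_ifs with h1 h2
    · omega
    · omega
    · omega
    · rfl

lemma T_spec1 (x : XX) (hx0 : 1 ≤ (x 0 : ℕ) ∧ (x 0 : ℕ) ≤ 4) :
    T x = Function.update x 0 (x 0 + 1) := by
  unfold T; rw [if_pos hx0]

lemma val_update_zero (x : XX) (hx0 : 1 ≤ (x 0 : ℕ) ∧ (x 0 : ℕ) ≤ 4) :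
    (T x 0 : ℕ) = (x 0 : ℕ) + 1 := by
  rw [T_spec1 x hx0, Function.update_self]
  apply Fin.val_add_one_of_lt
  rw [Fin.lt_def, Fin.val_last]
  have := xcVal_le 0 (x 0)
  omega

lemma G_exists {x : XX} (hx : x ∈ G) : ∃ i, 1 ≤ i ∧ (x i : ℕ) < 5 ^ (i + 1) := by
  obtain ⟨i, hi⟩ := hx.1.nonempty; exact ⟨i, hi⟩

lemma T_mapsTo : Set.MapsTo T G G := by
  intro x hx
  by_cases hx0 : 1 ≤ (x 0 : ℕ) ∧ (x 0 : ℕ) ≤ 4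
  · apply mem_G_of_eventually_eq 0 _ hx
    intro i hi
    rw [T_spec1 x hx0, Function.update_of_ne (by omega)]
  · exact mem_G_of_eventually_eq (Nat.find (G_exists hx))
      (T_spec x hx0 (G_exists hx)).2.2.2 hx

lemma find_not_lt {a b : XX} (ha0 : ¬(1 ≤ (a 0 : ℕ) ∧ (a 0 : ℕ) ≤ 4))
    (hb0 : ¬(1 ≤ (b 0 : ℕ) ∧ (b 0 : ℕ) ≤ 4))
    (hA : ∃ i, 1 ≤ i ∧ (a i : ℕ) < 5 ^ (i + 1))
    (hB : ∃ i, 1 ≤ i ∧ (b i : ℕ) < 5 ^ (i + 1))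
    (hab : T a = T b) : ¬ Nat.find hA < Nat.find hB := by
  intro hlt
  have h1 : T b (Nat.find hA) = 0 := (T_spec b hb0 hB).2.1 _ (Nat.find_spec hA).1 hlt
  have h2 : (T a (Nat.find hA) : ℕ) = (a (Nat.find hA) : ℕ) + 1 := (T_spec a ha0 hA).2.2.1
  rw [hab, h1] at h2
  simp at h2

lemma T_injOn : Set.InjOn T G := by
  intro x hx y hy hxy
  by_cases hx0 : 1 ≤ (x 0 : ℕ) ∧ (x 0 : ℕ) ≤ 4 <;>
    by_cases hy0 : 1 ≤ (y 0 : ℕ) ∧ (y 0 : ℕ) ≤ 4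
  · -- both small first coordinate
    funext i
    by_cases hi : i = 0
    · subst hi
      apply Fin.ext
      have e1 := val_update_zero x hx0
      have e2 := val_update_zero y hy0
      rw [hxy, e2] at e1
      omega
    · have e1 : T x i = x i := by rw [T_spec1 x hx0, Function.update_of_ne hi]
      have e2 : T y i = y i := by rw [T_spec1 y hy0, Function.update_of_ne hi]
      rw [← e1, ← e2, hxy]
  · exfalso
    have e1 := val_update_zero x hx0
    have e2 := (T_spec y hy0 (G_exists hy)).1
    rw [hxy, e2] at e1
    have : (∑ j ∈ Finset.range (Nat.find (G_exists hy) + 1), par j (y j) + 1) % 2 < 2 :=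
      Nat.mod_lt _ (by norm_num)
    omega
  · exfalso
    have e1 := val_update_zero y hy0
    have e2 := (T_spec x hx0 (G_exists hx)).1
    rw [← hxy, e2] at e1
    have : (∑ j ∈ Finset.range (Nat.find (G_exists hx) + 1), par j (x j) + 1) % 2 < 2 :=
      Nat.mod_lt _ (by norm_num)
    omega
  · -- both large first coordinate
    have hX := G_exists hx
    have hY := G_exists hy
    obtain ⟨s0x, szx, sNx, stx⟩ := T_spec x hx0 hX
    obtain ⟨s0y, szy, sNy, sty⟩ := T_spec y hy0 hY
    have hNM : Nat.find hX = Nat.find hY :=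
      le_antisymm (Nat.le_of_not_lt (find_not_lt hy0 hx0 hY hX hxy.symm))
        (Nat.le_of_not_lt (find_not_lt hx0 hy0 hX hY hxy))
    rw [← hNM] at s0y szy sNy sty
    set N := Nat.find hX with hNdef
    have hmid : ∀ j, 1 ≤ j → j < N → x j = y j := by
      intro j hj1 hj2
      have m1 : ¬(1 ≤ j ∧ (x j : ℕ) < 5 ^ (j + 1)) := Nat.find_min hX hj2
      have m2 : ¬(1 ≤ j ∧ (y j : ℕ) < 5 ^ (j + 1)) := Nat.find_min hY (hNM ▸ hj2)
      have b1 := xcVal_le j (x j)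
      have b2 := xcVal_le j (y j)
      apply Fin.ext
      omega
    have hcN : x N = y N := by
      apply Fin.ext
      rw [hxy] at sNx
      rw [sNy] at sNx
      omega
    have htail : ∀ i, N < i → x i = y i := by
      intro i hi
      rw [← stx i hi, ← sty i hi, hxy]
    have hc0 : x 0 = y 0 := by
      have e0 : (T x 0 : ℕ) = (T y 0 : ℕ) := by rw [hxy]
      rw [s0x, s0y, Finset.sum_range_succ', Finset.sum_range_succ'] at e0
      have hsum : ∑ j ∈ Finset.range N, par (j + 1) (x (j + 1)) =
          ∑ j ∈ Finset.range N, par (j + 1) (y (j + 1)) := by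
        apply Finset.sum_congr rfl
        intro j hj
        rw [Finset.mem_range] at hj
        rcases Nat.lt_or_ge (j + 1) N with hlt | hge
        · rw [hmid (j + 1) (by omega) hlt]
        · have : j + 1 = N := by omega
          rw [this, hcN]
      rw [hsum] at e0
      have p1 := par_le 0 (x 0)
      have p2 := par_le 0 (y 0)
      have hpar : par 0 (x 0) = par 0 (y 0) := by omega
      by_cases hz : x 0 = 0
      · have : par 0 (y 0) = 0 := by rw [← hpar, (par_zero_iff 0 (x 0)).mpr hz]
        rw [hz, (par_zero_iff 0 (y 0)).mp this]
      · have hzy : y 0 ≠ 0 := by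
          intro hc
          rw [(par_zero_iff 0 (y 0)).mpr hc] at hpar
          exact hz ((par_zero_iff 0 (x 0)).mp hpar)
        have v1 : (x 0 : ℕ) ≠ 0 := fun hc => hz (Fin.ext (by simpa using hc))
        have v2 : (y 0 : ℕ) ≠ 0 := fun hc => hzy (Fin.ext (by simpa using hc))
        have b1 := xcVal_le 0 (x 0)
        have b2 := xcVal_le 0 (y 0)
        apply Fin.ext
        simp only [zero_add, pow_one] at b1 b2
        omega
    funext i
    rcases Nat.lt_trichotomy i N with hi | hi | hi
    · by_cases hi0 : i = 0
      · subst hi0; exact hc0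
      · exact hmid i (by omega) hi
    · subst hi; exact hcN
    · exact htail i hi

/-- The "predecessor" base point used for surjectivity: maximal below `M`, `y M - 1` at `M`,
equal to `y` above `M`. Coordinate `0` will be overridden. -/
noncomputable def xbase (y : XX) (M : ℕ) : XX := fun i =>
  if i < M then ⟨5 ^ (i + 1), Nat.lt_succ_self _⟩
  else if hi : i = M then
    ⟨(y M : ℕ) - 1, by rw [hi]; exact lt_of_le_of_lt (Nat.sub_le _ _) (y M).isLt⟩
  else y i

lemma T_surjOn : Set.SurjOn T G G := by
  intro y hy
  by_cases hy0 : 2 ≤ (y 0 : ℕ) ∧ (y 0 : ℕ) ≤ 5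
  · -- first coordinate decrement
    refine ⟨Function.update y 0 ⟨(y 0 : ℕ) - 1, by omega⟩, ?_, ?_⟩
    · apply mem_G_of_eventually_eq 0 _ hy
      intro i hi
      rw [Function.update_of_ne (by omega)]
    · set x : XX := Function.update y 0 ⟨(y 0 : ℕ) - 1, by omega⟩ with hxdef
      have hx0v : (x 0 : ℕ) = (y 0 : ℕ) - 1 := by rw [hxdef, Function.update_self]
      have hx0 : 1 ≤ (x 0 : ℕ) ∧ (x 0 : ℕ) ≤ 4 := by omega
      rw [T_spec1 x hx0]
      funext i
      by_cases hi : i = 0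
      · subst hi
        rw [Function.update_self]
        apply Fin.ext
        have : ((x 0 + 1 : Xc 0) : ℕ) = (x 0 : ℕ) + 1 := by
          apply Fin.val_add_one_of_lt
          rw [Fin.lt_def, Fin.val_last]
          have := xcVal_le 0 (y 0)
          omega
        rw [this]
        omega
      · rw [Function.update_of_ne hi, hxdef, Function.update_of_ne hi]
  · -- y 0 ∈ {0, 1}
    have hy0v : (y 0 : ℕ) ≤ 1 := by
      have := xcVal_le 0 (y 0)
      simp only [zero_add, pow_one] at this
      omega
    have hM : ∃ i, 1 ≤ i ∧ y i ≠ 0 := by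
      obtain ⟨i, hi⟩ := hy.2.nonempty; exact ⟨i, hi⟩
    set M := Nat.find hM with hMdef
    have hM1 : 1 ≤ M := (Nat.find_spec hM).1
    have hMne : y M ≠ 0 := (Nat.find_spec hM).2
    have hMv : 1 ≤ (y M : ℕ) := by
      rcases Nat.eq_zero_or_pos (y M : ℕ) with h | h
      · exact absurd (Fin.ext (by simpa using h)) hMne
      · exact h
    have hyzero : ∀ i, 1 ≤ i → i < M → y i = 0 := by
      intro i hi1 hi2
      have := Nat.find_min hM hi2
      simp only [not_and_or] at this
      rcases this with h | h
      · omega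
      · simpa using h
    set S1 : ℕ := ∑ j ∈ Finset.range M, par (j + 1) (xbase y M (j + 1)) with hS1def
    set c0 : Xc 0 := if (S1 + 1) % 2 = (y 0 : ℕ) then 0 else ⟨5, by norm_num⟩ with hc0def
    set x : XX := Function.update (xbase y M) 0 c0 with hxdef
    -- basic coordinate facts about x
    have hxmid : ∀ i, 1 ≤ i → i < M → (x i : ℕ) = 5 ^ (i + 1) := by
      intro i hi1 hi2
      rw [hxdef, Function.update_of_ne (by omega)]
      unfold xbase
      rw [if_pos hi2]
    have hxM : (x M : ℕ) = (y M : ℕ) - 1 := by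
      rw [hxdef, Function.update_of_ne (by omega)]
      unfold xbase
      rw [if_neg (lt_irrefl _), dif_pos rfl]
    have hxtail : ∀ i, M < i → x i = y i := by
      intro i hi
      rw [hxdef, Function.update_of_ne (by omega)]
      unfold xbase
      rw [if_neg (by omega), dif_neg (by omega)]
    have hc0v : (c0 : ℕ) = 0 ∨ (c0 : ℕ) = 5 := by
      rw [hc0def]; split <;> simp
    have hx0 : ¬(1 ≤ (x 0 : ℕ) ∧ (x 0 : ℕ) ≤ 4) := by
      rw [hxdef, Function.update_self]
      omega
    have hex : ∃ i, 1 ≤ i ∧ (x i : ℕ) < 5 ^ (i + 1) := by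
      refine ⟨M, hM1, ?_⟩
      have := xcVal_le M (y M)
      omega
    have hfind : Nat.find hex = M := by
      rw [Nat.find_eq_iff]
      constructor
      · refine ⟨hM1, ?_⟩
        have := xcVal_le M (y M)
        omega
      · intro m hm
        simp only [not_and_or, not_lt]
        by_cases hm1 : 1 ≤ m
        · right; rw [hxmid m hm1 hm]
        · left; omega
    refine ⟨x, ?_, ?_⟩
    · exact mem_G_of_eventually_eq M hxtail hy
    · obtain ⟨s0, sz, sN, st⟩ := T_spec x hx0 hex
      rw [hfind] at s0 sz sN st
      funext i
      rcases Nat.lt_trichotomy i M with hi | hi | hi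
      · by_cases hi0 : i = 0
        · subst hi0
          apply Fin.ext
          rw [s0, Finset.sum_range_succ']
          have hsum : ∑ j ∈ Finset.range M, par (j + 1) (x (j + 1)) = S1 := by
            rw [hS1def]
            apply Finset.sum_congr rfl
            intro j _
            rw [hxdef, Function.update_of_ne (by omega)]
          rw [hsum]
          have hx00 : x 0 = c0 := by rw [hxdef, Function.update_self]
          rw [hx00]
          rw [hc0def]
          split_ifs with hsplit
          · have : par 0 (0 : Xc 0) = 0 := by rw [par_zero_iff]
            rw [this]
            omega
          · have : par 0 (⟨5, by norm_num⟩ : Xc 0) = 1 := by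
              unfold par
              rw [if_neg (by intro hc; simpa using congrArg Fin.val hc)]
            rw [this]
            omega
        · have := sz i (by omega) hi
          rw [this, hyzero i (by omega) hi]
      · subst hi
        apply Fin.ext
        rw [sN, hxM]
        omega
      · rw [st i hi, hxtail i hi]

theorem statement10 : Set.MapsTo T G G ∧ Set.BijOn T G G :=
  ⟨T_mapsTo, T_mapsTo, T_injOn, T_surjOn⟩
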